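/- For F ∈ 𝓕 define W(F) := 1 / ( Σ_{s ∈ F*\F, u(s) = +∞} 1/w(s) + Σ_{s ∈ F\F*, ℓ(s) = −∞} 1/w(s) ) if this divisor is nonzero, and W(F) := 0 otherwise. Let m₁ := max{ w(s)·|u(s)| : s ∈ F*, u(s) ≠ +∞ }, m₂ := max{ w(s)·|ℓ(s)| : s ∈ S\F*, ℓ(s) ≠ −∞ }, m₃ := max_{F ∈ 𝓕} W(F)·( c(F*) − c(F) − Σ_{s ∈ F*\F, u(s) ≠ +∞} u(s) + Σ_{s ∈ F\F*, ℓ(s) ≠ −∞} ℓ(s) ), where the maximum of an empty set is −∞, and set m := max{0, m₁, m₂, m₃}. Then a feasible deviation vector exists (i.e., the constrained minimum-cost inverse optimization problem under the weighted ℓ∞-norm objective is feasible) if and only if p^m is a feasible deviation vector. -/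

import Mathlib

open Finset

noncomputable section

variable {S : Type*}

/-- A deviation vector `p` is feasible: it respects the bounds `l ≤ p ≤ u`
(interpreted in the extended reals) and makes `Fstar` a minimum-cost member
of `𝓕` with respect to `c - p`. -/
def IsFeasibleDev (𝓕 : Finset (Finset S)) (Fstar : Finset S)
    (c : S → ℝ) (l u : S → EReal) (p : S → ℝ) : Prop :=
  (∀ s, l s ≤ (p s : EReal) ∧ (p s : EReal) ≤ u s) ∧
  ∀ F ∈ 𝓕, ∑ s ∈ Fstar, (c s - p s) ≤ ∑ s ∈ F, (c s - p s)

/-- The weighted ℓ∞-norm `‖p‖_{∞,w} = max_{s ∈ S} w(s)·|p(s)|`. -/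
def normI [Fintype S] [Nonempty S] (w p : S → ℝ) : ℝ :=
  (univ : Finset S).sup' univ_nonempty fun s => w s * |p s|

/-- The special deviation vector `p^δ` of the weighted ℓ∞-norm setting:
`δ/w(s)` clamped to `[ℓ(s), u(s)]` on `F*`, and `-δ/w(s)` clamped to
`[ℓ(s), u(s)]` outside of `F*`. -/
def pI [DecidableEq S] (Fstar : Finset S) (l u : S → EReal) (w : S → ℝ) (δ : ℝ) (s : S) : ℝ :=
  if s ∈ Fstar then
    if ((δ / w s : ℝ) : EReal) < l s then (l s).toReal
    else if u s < ((δ / w s : ℝ) : EReal) then (u s).toReal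
    else δ / w s
  else
    if ((-(δ / w s) : ℝ) : EReal) < l s then (l s).toReal
    else if u s < ((-(δ / w s) : ℝ) : EReal) then (u s).toReal
    else -(δ / w s)

/-- `W(F)` from the feasibility characterization for the weighted ℓ∞-norm. -/
def Wf [DecidableEq S] (Fstar F : Finset S) (l u : S → EReal) (w : S → ℝ) : ℝ :=
  if (∑ s ∈ (Fstar \ F).filter (fun s => u s = ⊤), (w s)⁻¹)
      + (∑ s ∈ (F \ Fstar).filter (fun s => l s = ⊥), (w s)⁻¹) ≠ 0 then
    1 / ((∑ s ∈ (Fstar \ F).filter (fun s => u s = ⊤), (w s)⁻¹)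
      + (∑ s ∈ (F \ Fstar).filter (fun s => l s = ⊥), (w s)⁻¹))
  else 0

/-- The bound `m = max{0, m₁, m₂, m₃}` from the feasibility characterization
for the weighted ℓ∞-norm (maxima over empty sets contribute nothing). -/
def mI [Fintype S] [DecidableEq S] (𝓕 : Finset (Finset S)) (Fstar : Finset S)
    (c : S → ℝ) (l u : S → EReal) (w : S → ℝ) : ℝ :=
  max 0 (max (max
    (((Fstar.filter fun s => u s ≠ ⊤).image fun s => w s * |(u s).toReal|).max.unbotD 0)
    (((((univ : Finset S) \ Fstar).filter fun s => l s ≠ ⊥).image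
        fun s => w s * |(l s).toReal|).max.unbotD 0))
    ((𝓕.image fun F => Wf Fstar F l u w *
      ((∑ s ∈ Fstar, c s) - (∑ s ∈ F, c s)
        - ∑ s ∈ (Fstar \ F).filter (fun s => u s ≠ ⊤), (u s).toReal
        + ∑ s ∈ (F \ Fstar).filter (fun s => l s ≠ ⊥), (l s).toReal)).max.unbotD 0))


lemma le_unbot'0 {a : ℝ} {M : WithBot ℝ} (h : (a : WithBot ℝ) ≤ M) :
    a ≤ M.unbotD 0 := by
  cases M with
  | bot => simp at h
  | coe b => simpa using h

lemma clamp_mem {x : ℝ} {a b : EReal} (ha : a ≠ ⊤) (hb : b ≠ ⊥) (hab : a ≤ b) :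
    a ≤ ((if (x : EReal) < a then a.toReal else if b < (x : EReal) then b.toReal else x : ℝ) : EReal)
      ∧ ((if (x : EReal) < a then a.toReal else if b < (x : EReal) then b.toReal else x : ℝ) : EReal) ≤ b := by
  split_ifs with h1 h2
  · have ha' : a ≠ ⊥ := fun h => by simp [h] at h1
    rw [EReal.coe_toReal ha ha']
    exact ⟨le_refl _, hab⟩
  · have hb' : b ≠ ⊤ := fun h => by simp [h] at h2
    rw [EReal.coe_toReal hb' hb]
    exact ⟨hab, le_refl _⟩
  · exact ⟨le_of_not_gt h1, le_of_not_gt h2⟩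

theorem linf_feasibility_characterization [Fintype S] [DecidableEq S]
    (𝓕 : Finset (Finset S)) (Fstar : Finset S) (c w : S → ℝ) (l u : S → EReal)
    (hw : ∀ s, 0 < w s) (hl : ∀ s, l s ≠ ⊤) (hu : ∀ s, u s ≠ ⊥)
    (hlu : ∀ s, l s ≤ u s) (h𝓕 : 𝓕.Nonempty) (hF : Fstar ∈ 𝓕) :
    (∃ p : S → ℝ, IsFeasibleDev 𝓕 Fstar c l u p) ↔
      IsFeasibleDev 𝓕 Fstar c l u (pI Fstar l u w (mI 𝓕 Fstar c l u w)) := by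
  constructor
  swap
  · exact fun h => ⟨_, h⟩
  rintro ⟨p, hpb, hpo⟩
  set m := mI 𝓕 Fstar c l u w with hmdef
  set P := pI Fstar l u w m with hPdef
  have hm0 : (0:ℝ) ≤ m := le_max_left _ _
  -- bounds extracted from m
  have hm1 : ∀ s ∈ Fstar, u s ≠ ⊤ → w s * |(u s).toReal| ≤ m := by
    intro s hs hus
    have hmem : w s * |(u s).toReal| ∈
        (Fstar.filter fun s => u s ≠ ⊤).image fun s => w s * |(u s).toReal| :=
      Finset.mem_image_of_mem _ (Finset.mem_filter.mpr ⟨hs, hus⟩)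
    refine (le_unbot'0 (Finset.le_max hmem)).trans ?_
    rw [hmdef]
    exact (le_max_left _ _).trans ((le_max_left _ _).trans (le_max_right _ _))
  have hm2 : ∀ s, s ∉ Fstar → l s ≠ ⊥ → w s * |(l s).toReal| ≤ m := by
    intro s hs hls
    have hmem : w s * |(l s).toReal| ∈
        (((univ : Finset S) \ Fstar).filter fun s => l s ≠ ⊥).image
          fun s => w s * |(l s).toReal| :=
      Finset.mem_image_of_mem _
        (Finset.mem_filter.mpr ⟨Finset.mem_sdiff.mpr ⟨Finset.mem_univ s, hs⟩, hls⟩)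
    refine (le_unbot'0 (Finset.le_max hmem)).trans ?_
    rw [hmdef]
    exact (le_max_right _ _).trans ((le_max_left _ _).trans (le_max_right _ _))
  have hm3 : ∀ F ∈ 𝓕, Wf Fstar F l u w *
      ((∑ s ∈ Fstar, c s) - (∑ s ∈ F, c s)
        - ∑ s ∈ (Fstar \ F).filter (fun s => u s ≠ ⊤), (u s).toReal
        + ∑ s ∈ (F \ Fstar).filter (fun s => l s ≠ ⊥), (l s).toReal) ≤ m := by
    intro F hFm
    have hmem := Finset.mem_image_of_mem (fun F => Wf Fstar F l u w *
      ((∑ s ∈ Fstar, c s) - (∑ s ∈ F, c s)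
        - ∑ s ∈ (Fstar \ F).filter (fun s => u s ≠ ⊤), (u s).toReal
        + ∑ s ∈ (F \ Fstar).filter (fun s => l s ≠ ⊥), (l s).toReal)) hFm
    refine (le_unbot'0 (Finset.le_max hmem)).trans ?_
    rw [hmdef]
    exact (le_max_right _ _).trans (le_max_right _ _)
  constructor
  · -- bounds on P
    intro s
    by_cases hs : s ∈ Fstar <;>
      simp only [hPdef, pI, hs, if_true, if_false] <;>
      exact clamp_mem (hl s) (hu s) (hlu s)
  · -- optimality of P
    intro F hFm
    -- pointwise estimates
    have ha1 : ∀ s ∈ (Fstar \ F).filter (fun s => u s = ⊤), m / w s ≤ P s := by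
      intro s hsm
      obtain ⟨hsd, hut⟩ := Finset.mem_filter.mp hsm
      have hsF : s ∈ Fstar := (Finset.mem_sdiff.mp hsd).1
      simp only [hPdef, pI, hsF, if_true]
      split_ifs with h1 h2
      · have hlb : l s ≠ ⊥ := fun h => by simp [h] at h1
        rw [← EReal.coe_toReal (hl s) hlb] at h1
        exact le_of_lt (EReal.coe_lt_coe_iff.mp h1)
      · rw [hut] at h2
        exact absurd h2 (not_top_lt)
      · exact le_refl _
    have ha2 : ∀ s ∈ (Fstar \ F).filter (fun s => ¬ u s = ⊤), (u s).toReal ≤ P s := by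
      intro s hsm
      obtain ⟨hsd, hut⟩ := Finset.mem_filter.mp hsm
      have hsF : s ∈ Fstar := (Finset.mem_sdiff.mp hsd).1
      have habs : |(u s).toReal| ≤ m / w s := by
        rw [le_div_iff₀ (hw s), mul_comm]
        exact hm1 s hsF hut
      simp only [hPdef, pI, hsF, if_true]
      split_ifs with h1 h2
      · have hlb : l s ≠ ⊥ := fun h => by simp [h] at h1
        rw [← EReal.coe_toReal (hl s) hlb] at h1
        have h1' := EReal.coe_lt_coe_iff.mp h1
        have hle : (l s).toReal ≤ (u s).toReal := EReal.toReal_le_toReal (hlu s) hlb hut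
        have := le_abs_self (u s).toReal
        linarith
      · exact le_refl _
      · exact le_trans (le_abs_self _) habs
    have hb1 : ∀ s ∈ (F \ Fstar).filter (fun s => l s = ⊥), P s ≤ -(m / w s) := by
      intro s hsm
      obtain ⟨hsd, hlb⟩ := Finset.mem_filter.mp hsm
      have hsF : s ∉ Fstar := (Finset.mem_sdiff.mp hsd).2
      simp only [hPdef, pI, hsF, if_false]
      split_ifs with h1 h2
      · rw [hlb] at h1
        exact absurd h1 (not_lt_bot)
      · have hut : u s ≠ ⊤ := fun h => by simp [h] at h2
        rw [← EReal.coe_toReal hut (hu s)] at h2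
        exact le_of_lt (EReal.coe_lt_coe_iff.mp h2)
      · exact le_refl _
    have hb2 : ∀ s ∈ (F \ Fstar).filter (fun s => ¬ l s = ⊥), P s ≤ (l s).toReal := by
      intro s hsm
      obtain ⟨hsd, hlb⟩ := Finset.mem_filter.mp hsm
      have hsF : s ∉ Fstar := (Finset.mem_sdiff.mp hsd).2
      have habs : |(l s).toReal| ≤ m / w s := by
        rw [le_div_iff₀ (hw s), mul_comm]
        exact hm2 s hsF hlb
      have hkey : -(m / w s) ≤ (l s).toReal := (abs_le.mp habs).1
      simp only [hPdef, pI, hsF, if_false]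
      split_ifs with h1 h2
      · exact le_refl _
      · exfalso
        have hl2 : ((l s).toReal : EReal) = l s := EReal.coe_toReal (hl s) hlb
        have : ((-(m / w s) : ℝ) : EReal) ≤ l s := by
          rw [← hl2]; exact EReal.coe_le_coe_iff.mpr hkey
        exact absurd (lt_of_le_of_lt (this.trans (hlu s)) h2) (lt_irrefl _)
      · exact hkey
    -- sum splits
    have hsplit1 := Finset.sum_filter_add_sum_filter_not (Fstar \ F) (fun s => u s = ⊤) P
    have hsplit2 := Finset.sum_filter_add_sum_filter_not (F \ Fstar) (fun s => l s = ⊥) P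
    have hS1 : ∑ s ∈ (Fstar \ F).filter (fun s => u s = ⊤), m / w s
        = m * ∑ s ∈ (Fstar \ F).filter (fun s => u s = ⊤), (w s)⁻¹ := by
      rw [Finset.mul_sum]
      exact Finset.sum_congr rfl fun s _ => div_eq_mul_inv _ _
    have hS2 : ∑ s ∈ (F \ Fstar).filter (fun s => l s = ⊥), (-(m / w s))
        = -(m * ∑ s ∈ (F \ Fstar).filter (fun s => l s = ⊥), (w s)⁻¹) := by
      rw [Finset.mul_sum, ← Finset.sum_neg_distrib]
      exact Finset.sum_congr rfl fun s _ => by rw [div_eq_mul_inv]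
    have hsum1 : ∑ s ∈ (Fstar \ F).filter (fun s => u s = ⊤), m / w s
        + ∑ s ∈ (Fstar \ F).filter (fun s => ¬ u s = ⊤), (u s).toReal
        ≤ ∑ s ∈ Fstar \ F, P s := by
      rw [← hsplit1]
      exact add_le_add (Finset.sum_le_sum ha1) (Finset.sum_le_sum ha2)
    have hsum2 : ∑ s ∈ F \ Fstar, P s
        ≤ ∑ s ∈ (F \ Fstar).filter (fun s => l s = ⊥), (-(m / w s))
        + ∑ s ∈ (F \ Fstar).filter (fun s => ¬ l s = ⊥), (l s).toReal := by
      rw [← hsplit2]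
      exact add_le_add (Finset.sum_le_sum hb1) (Finset.sum_le_sum hb2)
    set D1 := ∑ s ∈ (Fstar \ F).filter (fun s => u s = ⊤), (w s)⁻¹ with hD1def
    set D2 := ∑ s ∈ (F \ Fstar).filter (fun s => l s = ⊥), (w s)⁻¹ with hD2def
    have hD1nn : 0 ≤ D1 :=
      Finset.sum_nonneg fun s _ => le_of_lt (inv_pos.mpr (hw s))
    have hD2nn : 0 ≤ D2 :=
      Finset.sum_nonneg fun s _ => le_of_lt (inv_pos.mpr (hw s))
    -- the key inequality
    have hkey : (∑ s ∈ Fstar, c s) - (∑ s ∈ F, c s)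
        ≤ ∑ s ∈ Fstar \ F, P s - ∑ s ∈ F \ Fstar, P s := by
      by_cases hD : D1 + D2 = 0
      · -- both filters are empty; use the feasible p
        have hD1 : D1 = 0 := by linarith
        have hD2 : D2 = 0 := by linarith
        have he1 : ∀ s ∈ Fstar \ F, ¬ u s = ⊤ := by
          intro s hsd hut
          have := (Finset.sum_eq_zero_iff_of_nonneg
            (fun s _ => le_of_lt (inv_pos.mpr (hw s)))).mp hD1 s
            (Finset.mem_filter.mpr ⟨hsd, hut⟩)
          exact absurd this (ne_of_gt (inv_pos.mpr (hw s)))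
        have he2 : ∀ s ∈ F \ Fstar, ¬ l s = ⊥ := by
          intro s hsd hlb
          have := (Finset.sum_eq_zero_iff_of_nonneg
            (fun s _ => le_of_lt (inv_pos.mpr (hw s)))).mp hD2 s
            (Finset.mem_filter.mpr ⟨hsd, hlb⟩)
          exact absurd this (ne_of_gt (inv_pos.mpr (hw s)))
        have hf1 : (Fstar \ F).filter (fun s => ¬ u s = ⊤) = Fstar \ F :=
          Finset.filter_true_of_mem he1
        have hf2 : (F \ Fstar).filter (fun s => ¬ l s = ⊥) = F \ Fstar :=
          Finset.filter_true_of_mem he2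
        have hf1' : (Fstar \ F).filter (fun s => u s = ⊤) = ∅ :=
          Finset.filter_false_of_mem he1
        have hf2' : (F \ Fstar).filter (fun s => l s = ⊥) = ∅ :=
          Finset.filter_false_of_mem he2
        -- from feasibility of p
        have hp1 : ∀ s ∈ Fstar \ F, p s ≤ (u s).toReal := by
          intro s hsd
          have hut := he1 s hsd
          have := (hpb s).2
          rw [← EReal.coe_toReal hut (hu s)] at this
          exact EReal.coe_le_coe_iff.mp this
        have hp2 : ∀ s ∈ F \ Fstar, (l s).toReal ≤ p s := by
          intro s hsd
          have hlb := he2 s hsd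
          have := (hpb s).1
          rw [← EReal.coe_toReal (hl s) hlb] at this
          exact EReal.coe_le_coe_iff.mp this
        have hpineq := hpo F hFm
        rw [Finset.sum_sub_distrib, Finset.sum_sub_distrib] at hpineq
        have hpd : ∑ s ∈ Fstar \ F, p s - ∑ s ∈ F \ Fstar, p s
            = ∑ s ∈ Fstar, p s - ∑ s ∈ F, p s := Finset.sum_sdiff_sub_sum_sdiff
        have hup : ∑ s ∈ Fstar \ F, p s ≤ ∑ s ∈ Fstar \ F, (u s).toReal :=
          Finset.sum_le_sum hp1
        have hlp : ∑ s ∈ F \ Fstar, (l s).toReal ≤ ∑ s ∈ F \ Fstar, p s :=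
          Finset.sum_le_sum hp2
        rw [hf1] at hsum1
        rw [hf2] at hsum2
        rw [hf1'] at hsum1
        rw [hf2'] at hsum2
        simp only [Finset.sum_empty, zero_add] at hsum1 hsum2
        linarith
      · -- D1 + D2 > 0 ; use hm3
        have hDpos : 0 < D1 + D2 := lt_of_le_of_ne (by linarith) (Ne.symm hD)
        have hW : Wf Fstar F l u w = 1 / (D1 + D2) := by
          rw [Wf, if_pos]
          exact hD
        have h3 := hm3 F hFm
        rw [hW, one_div_mul_eq_div] at h3
        have hA := (div_le_iff₀ hDpos).mp h3
        have hrw1 : (Fstar \ F).filter (fun s => u s ≠ ⊤)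
            = (Fstar \ F).filter (fun s => ¬ u s = ⊤) := rfl
        have hrw2 : (F \ Fstar).filter (fun s => l s ≠ ⊥)
            = (F \ Fstar).filter (fun s => ¬ l s = ⊥) := rfl
        rw [hrw1, hrw2] at hA
        rw [hS1] at hsum1
        rw [hS2] at hsum2
        linarith
    have hPd : ∑ s ∈ Fstar \ F, P s - ∑ s ∈ F \ Fstar, P s
        = ∑ s ∈ Fstar, P s - ∑ s ∈ F, P s := Finset.sum_sdiff_sub_sum_sdiff
    rw [Finset.sum_sub_distrib, Finset.sum_sub_distrib]
    linarith
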